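/- In critical oriented Bernoulli percolation on L, there exists a constant c > 0 such that for all n ≥ 1, P(0 → ℓ_n) ≥ c/√(w_n), where w_n is any integer satisfying the box-crossing lower bound V(w_n, 2n) ≥ c₀ for a universal constant c₀ > 0. -/

import Mathlib

open MeasureTheory

namespace OrientedPerc

/-- Vertices of the plane; the lattice `L` consists of those with even coordinate sum. -/
abbrev Vtx := ℤ × ℤ

/-- An oriented edge is given by its base vertex and a direction:
`true` for the edge to `x + (1,1)`, `false` for the edge to `x + (-1,1)`. -/
abbrev Edge := Vtx × Bool

/-- A percolation configuration: each oriented edge is open (`true`) or closed. -/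
abbrev Config := Edge → Bool

/-- The endpoint of an oriented edge. -/
def tip (e : Edge) : Vtx := e.1 + (if e.2 then (1, 1) else (-1, 1))

/-- One open oriented step from `x` to `y`. -/
def Step (ω : Config) (x y : Vtx) : Prop :=
  ∃ b : Bool, ω (x, b) = true ∧ y = tip (x, b)

/-- `x → y`: there is an open oriented path from `x` to `y`. -/
def Conn (ω : Config) (x y : Vtx) : Prop := Relation.ReflTransGen (Step ω) x y

/-- `x → y` using only vertices in the set `S`. -/
def ConnIn (S : Set Vtx) (ω : Config) (x y : Vtx) : Prop :=
  x ∈ S ∧ Relation.ReflTransGen (fun a b => Step ω a b ∧ b ∈ S) x y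

/-- The box `[a,b] × [c,d]` intersected with the lattice `L`. -/
def box (a b c d : ℤ) : Set Vtx :=
  {v | a ≤ v.1 ∧ v.1 ≤ b ∧ c ≤ v.2 ∧ v.2 ≤ d ∧ Even (v.1 + v.2)}

/-- The box `[a,b] × [c,d]` is crossed vertically (bottom to top). -/
def CrossedVert (ω : Config) (a b c d : ℤ) : Prop :=
  ∃ x y : Vtx, x.2 = c ∧ y.2 = d ∧ ConnIn (box a b c d) ω x y

/-- The box `[a,b] × [c,d]` is crossed from left to right. -/
def CrossedLR (ω : Config) (a b c d : ℤ) : Prop :=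
  ∃ x y : Vtx, x.1 = a ∧ y.1 = b ∧ ConnIn (box a b c d) ω x y

/-- `μ` is Bernoulli oriented bond percolation with parameter `p`:
the states of edges are i.i.d., each open with probability `p`. -/
def IsBernoulli (μ : Measure Config) (p : ℝ) : Prop :=
  IsProbabilityMeasure μ ∧ p ∈ Set.Icc (0 : ℝ) 1 ∧
    ∀ (s : Finset Edge) (f : Edge → Bool),
      (μ {ω | ∀ e ∈ s, ω e = f e}).toReal = ∏ e ∈ s, (if f e then p else 1 - p)

/-- Probability of a vertical crossing of `[0,m] × [0,n]`. -/
noncomputable def V (μ : Measure Config) (m n : ℕ) : ℝ :=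
  (μ {ω | CrossedVert ω 0 (m : ℤ) 0 (n : ℤ)}).toReal

/-- Probability of a left-right crossing of `[0,m] × [0,n]`. -/
noncomputable def H (μ : Measure Config) (m n : ℕ) : ℝ :=
  (μ {ω | CrossedLR ω 0 (m : ℤ) 0 (n : ℤ)}).toReal

/-- The event `R_n ≥ t`: some `(y,0)` with `y ≤ 0` even is connected to some
`(x,n)` with `x ≥ t`. -/
def Rge (ω : Config) (n t : ℤ) : Prop :=
  ∃ x y : ℤ, Even y ∧ y ≤ 0 ∧ t ≤ x ∧ Conn ω (y, 0) (x, n)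

/-- The event `0 → ℓ_n`. -/
def ConnToLine (ω : Config) (n : ℤ) : Prop := ∃ x : ℤ, Conn ω (0, 0) (x, n)


/-! ### Path machinery -/

/-- Endpoint of the path starting at `u` with direction list `l`. -/
def ep (u : Vtx) : List Bool → Vtx
  | [] => u
  | b :: l => ep (tip (u, b)) l

/-- Edges used by the path starting at `u` with direction list `l`. -/
def edgesOf (u : Vtx) : List Bool → List Edge
  | [] => []
  | b :: l => (u, b) :: edgesOf (tip (u, b)) l

/-- Vertices visited (after the start) by the path. -/
def mids (u : Vtx) : List Bool → List Vtx
  | [] => []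
  | b :: l => tip (u, b) :: mids (tip (u, b)) l

lemma tip_snd (e : Edge) : (tip e).2 = e.1.2 + 1 := by
  rcases e with ⟨v, b⟩; cases b <;> simp [tip]

lemma ep_snd (u : Vtx) (l : List Bool) : (ep u l).2 = u.2 + l.length := by
  induction l generalizing u with
  | nil => simp [ep]
  | cons b l ih => simp [ep, ih, tip_snd]; ring

lemma ep_append (u : Vtx) (l₁ l₂ : List Bool) : ep u (l₁ ++ l₂) = ep (ep u l₁) l₂ := by
  induction l₁ generalizing u with
  | nil => simp [ep]
  | cons b l ih => simp [ep, ih]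

lemma edgesOf_append (u : Vtx) (l₁ l₂ : List Bool) :
    edgesOf u (l₁ ++ l₂) = edgesOf u l₁ ++ edgesOf (ep u l₁) l₂ := by
  induction l₁ generalizing u with
  | nil => simp [edgesOf, ep]
  | cons b l ih => simp [edgesOf, ep, ih]

lemma mids_append (u : Vtx) (l₁ l₂ : List Bool) :
    mids u (l₁ ++ l₂) = mids u l₁ ++ mids (ep u l₁) l₂ := by
  induction l₁ generalizing u with
  | nil => simp [mids, ep]
  | cons b l ih => simp [mids, ep, ih]

lemma ep_mem_mids (u : Vtx) (l : List Bool) (h : l ≠ []) : ep u l ∈ mids u l := by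
  induction l generalizing u with
  | nil => exact absurd rfl h
  | cons b l ih =>
    by_cases hl : l = []
    · subst hl; simp [ep, mids]
    · simp only [ep, mids, List.mem_cons]
      exact Or.inr (ih _ hl)

lemma edge_snd_of_mem (u : Vtx) (l : List Bool) :
    ∀ e ∈ edgesOf u l, u.2 ≤ e.1.2 ∧ e.1.2 < u.2 + l.length := by
  induction l generalizing u with
  | nil => simp [edgesOf]
  | cons b l ih =>
    intro e he
    simp only [edgesOf, List.mem_cons] at he
    rcases he with rfl | he
    · simp
    · have h2 : u.2 + 1 ≤ e.1.2 ∧ e.1.2 < u.2 + 1 + l.length := by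
        simpa [tip_snd] using ih _ e he
      simp only [List.length_cons]
      constructor <;> omega

lemma conn_of_list {ω : Config} {u v : Vtx} {l : List Bool}
    (h1 : ep u l = v) (h2 : ∀ e ∈ edgesOf u l, ω e = true) : Conn ω u v := by
  induction l generalizing u with
  | nil => exact h1 ▸ Relation.ReflTransGen.refl
  | cons b l ih =>
    refine Relation.ReflTransGen.head ⟨b, h2 _ (by simp [edgesOf]), rfl⟩ ?_
    exact ih h1 fun e he => h2 e (by simp [edgesOf, he])

lemma connIn_to_list {ω : Config} {S : Set Vtx} {u v : Vtx}
    (h : Relation.ReflTransGen (fun a b => Step ω a b ∧ b ∈ S) u v) :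
    ∃ l : List Bool, ep u l = v ∧ (∀ e ∈ edgesOf u l, ω e = true) ∧
      (∀ m ∈ mids u l, m ∈ S) := by
  induction h using Relation.ReflTransGen.head_induction_on with
  | refl => exact ⟨[], rfl, by simp [edgesOf], by simp [mids]⟩
  | head hstep _ ih =>
    obtain ⟨⟨b, hb, rfl⟩, hmem⟩ := hstep
    obtain ⟨l, h1, h2, h3⟩ := ih
    refine ⟨b :: l, h1, ?_, ?_⟩
    · intro e he
      simp only [edgesOf, List.mem_cons] at he
      rcases he with rfl | he
      · exact hb
      · exact h2 e he
    · intro m hm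
      simp only [mids, List.mem_cons] at hm
      rcases hm with rfl | hm
      · exact hmem
      · exact h3 m hm

lemma conn_to_list {ω : Config} {u v : Vtx} (h : Conn ω u v) :
    ∃ l : List Bool, ep u l = v ∧ ∀ e ∈ edgesOf u l, ω e = true := by
  have h' : Relation.ReflTransGen (fun a b => Step ω a b ∧ b ∈ (Set.univ : Set Vtx)) u v :=
    Relation.ReflTransGen.mono (fun a b (hab : Step ω a b) =>
      (⟨hab, Set.mem_univ _⟩ : Step ω a b ∧ b ∈ (Set.univ : Set Vtx))) _ _ h
  obtain ⟨l, h1, h2, -⟩ := connIn_to_list h'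
  exact ⟨l, h1, h2⟩

lemma conn_map {ω ω' : Config} {g : Vtx → Vtx}
    (hg : ∀ a b, Step ω a b → Step ω' (g a) (g b)) {u v : Vtx} (h : Conn ω u v) :
    Conn ω' (g u) (g v) := by
  induction h with
  | refl => exact Relation.ReflTransGen.refl
  | tail _ hstep ih => exact Relation.ReflTransGen.tail ih (hg _ _ hstep)

lemma conn_map_rev {ω ω' : Config} {g : Vtx → Vtx}
    (hg : ∀ a b, Step ω a b → Step ω' (g b) (g a)) {u v : Vtx} (h : Conn ω u v) :
    Conn ω' (g v) (g u) := by
  induction h with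
  | refl => exact Relation.ReflTransGen.refl
  | tail _ hstep ih => exact Relation.ReflTransGen.head (hg _ _ hstep) ih

/-! ### Splitting a vertical crossing at the middle line -/

lemma crossing_split {ω : Config} {w n : ℕ} (hn : 1 ≤ n)
    (h : CrossedVert ω 0 (w : ℤ) 0 ((2 * n : ℕ) : ℤ)) :
    ∃ x : ℤ, 0 ≤ x ∧ x ≤ (w : ℤ) ∧ (∃ y : ℤ, Conn ω (y, 0) (x, (n : ℤ))) ∧
      (∃ z : ℤ, Conn ω (x, (n : ℤ)) (z, ((2 * n : ℕ) : ℤ))) := by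
  obtain ⟨a, b, ha, hb, _, hR⟩ := h
  obtain ⟨l, hep, hopen, hmid⟩ := connIn_to_list hR
  have hlen : l.length = 2 * n := by
    have := ep_snd a l
    rw [hep, hb, ha] at this
    omega
  have hsplit : l.take n ++ l.drop n = l := List.take_append_drop n l
  set mid := ep a (l.take n) with hmiddef
  have htake : (l.take n).length = n := by
    rw [List.length_take]; omega
  have hmid2 : mid.2 = (n : ℤ) := by
    have := ep_snd a (l.take n)
    rw [htake, ha] at this
    simpa using this
  have hmidmem : mid ∈ box 0 (w : ℤ) 0 ((2 * n : ℕ) : ℤ) := by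
    apply hmid
    rw [← hsplit, mids_append]
    refine List.mem_append_left _ (ep_mem_mids a (l.take n) ?_)
    intro hnil
    rw [hnil] at htake
    simp at htake
    omega
  have hmideq : mid = (mid.1, (n : ℤ)) := by
    rw [← hmid2]
  have haeq : a = (a.1, (0 : ℤ)) := by
    rw [← ha]
  refine ⟨mid.1, hmidmem.1, hmidmem.2.1, ⟨a.1, ?_⟩, ⟨b.1, ?_⟩⟩
  · rw [← hmideq, ← haeq]
    refine conn_of_list hmiddef.symm fun e he => ?_
    apply hopen
    rw [← hsplit, edgesOf_append]
    exact List.mem_append_left _ he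
  · have hbeq : b = (b.1, ((2 * n : ℕ) : ℤ)) := by rw [← hb]
    rw [← hmideq, ← hbeq]
    have hep2 : ep mid (l.drop n) = b := by
      rw [hmiddef, ← ep_append, hsplit, hep]
    refine conn_of_list hep2 fun e he => ?_
    apply hopen
    rw [← hsplit, edgesOf_append]
    exact List.mem_append_right _ he

/-! ### Cylinder events -/

/-- Cylinder events determined by edges in `E`. -/
def cylOn (E : Set Edge) : Set (Set Config) :=
  {S | ∃ (s : Finset Edge) (f : Edge → Bool), ↑s ⊆ E ∧ S = {ω | ∀ e ∈ s, ω e = f e}}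

lemma isPiSystem_cylOn (E : Set Edge) : IsPiSystem (cylOn E) := by
  rintro S ⟨s₁, f₁, hs₁, rfl⟩ T ⟨s₂, f₂, hs₂, rfl⟩ hne
  obtain ⟨ω₀, h₁, h₂⟩ := hne
  refine ⟨s₁ ∪ s₂, ω₀, ?_, ?_⟩
  · rw [Finset.coe_union]
    exact Set.union_subset hs₁ hs₂
  · ext ω
    simp only [Set.mem_inter_iff, Set.mem_setOf_eq, Finset.mem_union]
    constructor
    · rintro ⟨hω₁, hω₂⟩ e (he | he)
      · rw [hω₁ e he, ← h₁ e he]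
      · rw [hω₂ e he, ← h₂ e he]
    · intro hω
      exact ⟨fun e he => by rw [hω e (Or.inl he), h₁ e he],
             fun e he => by rw [hω e (Or.inr he), h₂ e he]⟩

lemma measurableSet_of_cylOn {E : Set Edge} {S : Set Config} (h : S ∈ cylOn E) :
    MeasurableSet S := by
  obtain ⟨s, f, -, rfl⟩ := h
  have : {ω : Config | ∀ e ∈ s, ω e = f e} = ⋂ e ∈ s, {ω : Config | ω e = f e} := by
    ext ω; simp
  rw [this]
  refine MeasurableSet.biInter s.countable_toSet fun e _ => ?_
  have : {ω : Config | ω e = f e} = (fun ω : Config => ω e) ⁻¹' {f e} := by ext ω; simp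
  rw [this]
  exact (measurable_pi_apply e) (measurableSet_singleton (f e))

lemma generateFrom_cylOn_le (E : Set Edge) :
    MeasurableSpace.generateFrom (cylOn E) ≤ (inferInstance : MeasurableSpace Config) :=
  MeasurableSpace.generateFrom_le fun _ h => measurableSet_of_cylOn h

lemma pi_eq_generateFrom_cylOn :
    (inferInstance : MeasurableSpace Config)
      = MeasurableSpace.generateFrom (cylOn Set.univ) := by
  refine le_antisymm ?_ (generateFrom_cylOn_le _)
  rw [show (inferInstance : MeasurableSpace Config) = MeasurableSpace.pi from rfl,
    MeasurableSpace.pi]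
  refine iSup_le fun e => ?_
  intro S hS
  obtain ⟨t, -, rfl⟩ := hS
  have : (fun ω : Config => ω e) ⁻¹' t = ⋃ b ∈ t, {ω : Config | ω e = b} := by
    ext ω; simp [eq_comm]
  rw [this]
  refine MeasurableSet.biUnion t.to_countable fun b _ => ?_
  refine MeasurableSpace.measurableSet_generateFrom ⟨{e}, fun _ => b, Set.subset_univ _, ?_⟩
  ext ω; simp

/-! ### Invariance of the Bernoulli measure under edge bijections -/

variable {μ : Measure Config} {p : ℝ}

lemma measurable_remap (σ : Edge ≃ Edge) :
    Measurable (fun ω : Config => fun e => ω (σ e)) :=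
  measurable_pi_lambda _ fun e => measurable_pi_apply (σ e)

lemma map_config_eq (hB : IsBernoulli μ p) (σ : Edge ≃ Edge) :
    μ.map (fun ω : Config => fun e => ω (σ e)) = μ := by
  have hP : IsProbabilityMeasure μ := hB.1
  have hF := measurable_remap σ
  have hPmap : IsProbabilityMeasure (μ.map (fun ω : Config => fun e => ω (σ e))) :=
    Measure.isProbabilityMeasure_map hF.aemeasurable
  refine ext_of_generate_finite (cylOn Set.univ) pi_eq_generateFrom_cylOn
    (isPiSystem_cylOn _) ?_ (by simp)
  rintro S ⟨s, f, -, rfl⟩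
  rw [Measure.map_apply hF (measurableSet_of_cylOn ⟨s, f, Set.subset_univ _, rfl⟩)]
  have hpre : (fun ω : Config => fun e => ω (σ e)) ⁻¹' {ω | ∀ e ∈ s, ω e = f e}
      = {ω : Config | ∀ e ∈ s.image σ, ω e = f (σ.symm e)} := by
    ext ω
    simp only [Set.mem_preimage, Set.mem_setOf_eq, Finset.mem_image]
    constructor
    · rintro h e ⟨e', he', rfl⟩
      rw [Equiv.symm_apply_apply]
      exact h e' he'
    · intro h e he
      have := h (σ e) ⟨e, he, rfl⟩
      rwa [Equiv.symm_apply_apply] at this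
  rw [hpre]
  refine (ENNReal.toReal_eq_toReal_iff' (measure_ne_top _ _) (measure_ne_top _ _)).mp ?_
  rw [hB.2.2, hB.2.2]
  rw [Finset.prod_image (fun a _ b _ h => σ.injective h)]
  simp

/-! ### Independence of the lower and upper half planes -/

lemma indep_halves (hB : IsBernoulli μ p) (n : ℤ) :
    ProbabilityTheory.Indep
      (MeasurableSpace.generateFrom (cylOn {e : Edge | e.1.2 < n}))
      (MeasurableSpace.generateFrom (cylOn {e : Edge | n ≤ e.1.2})) μ := by
  have hP : IsProbabilityMeasure μ := hB.1
  refine ProbabilityTheory.IndepSets.indep' (fun s hs => measurableSet_of_cylOn hs)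
    (fun s hs => measurableSet_of_cylOn hs) (isPiSystem_cylOn _) (isPiSystem_cylOn _) ?_
  rw [ProbabilityTheory.IndepSets_iff]
  rintro S T ⟨s₁, f₁, hs₁, rfl⟩ ⟨s₂, f₂, hs₂, rfl⟩
  classical
  have hd : Disjoint s₁ s₂ := by
    rw [Finset.disjoint_left]
    intro e he₁ he₂
    have h1 : e.1.2 < n := hs₁ he₁
    have h2 : n ≤ e.1.2 := hs₂ he₂
    omega
  set g : Edge → Bool := fun e => if e ∈ s₁ then f₁ e else f₂ e with hg
  have hkey : {ω : Config | ∀ e ∈ s₁, ω e = f₁ e} ∩ {ω : Config | ∀ e ∈ s₂, ω e = f₂ e}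
      = {ω : Config | ∀ e ∈ s₁ ∪ s₂, ω e = g e} := by
    ext ω
    simp only [Set.mem_inter_iff, Set.mem_setOf_eq, Finset.mem_union]
    constructor
    · rintro ⟨h₁, h₂⟩ e (he | he)
      · rw [hg]; simp only [he, if_pos]; exact h₁ e he
      · rw [hg]
        have : e ∉ s₁ := fun hc => (Finset.disjoint_left.mp hd hc) he
        simp only [this, if_neg, if_false]
        exact h₂ e he
    · intro h
      constructor
      · intro e he
        have := h e (Or.inl he)
        simpa [hg, he] using this
      · intro e he
        have h1 := h e (Or.inr he)
        have h2 : e ∉ s₁ := fun hc => (Finset.disjoint_left.mp hd hc) he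
        simpa [hg, h2] using h1
  rw [hkey]
  refine (ENNReal.toReal_eq_toReal_iff' (measure_ne_top _ _) ?_).mp ?_
  · exact ENNReal.mul_ne_top (measure_ne_top _ _) (measure_ne_top _ _)
  rw [ENNReal.toReal_mul, hB.2.2, hB.2.2, hB.2.2, Finset.prod_union hd]
  congr 1
  · refine Finset.prod_congr rfl fun e he => ?_
    rw [hg]; simp [he]
  · refine Finset.prod_congr rfl fun e he => ?_
    have : e ∉ s₁ := fun hc => (Finset.disjoint_left.mp hd hc) he
    rw [hg]; simp [this]

/-! ### Measurability of connection events w.r.t. half-plane σ-algebras -/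

lemma highE_meas (u : Vtx) (m : ℤ) :
    MeasurableSet[MeasurableSpace.generateFrom (cylOn {e : Edge | u.2 ≤ e.1.2})]
      {ω : Config | ∃ z : ℤ, Conn ω u (z, m)} := by
  classical
  have hrep : {ω : Config | ∃ z : ℤ, Conn ω u (z, m)}
      = ⋃ q : ℤ × List Bool,
          {ω : Config | ep u q.2 = (q.1, m) ∧ ∀ e ∈ (edgesOf u q.2).toFinset, ω e = true} := by
    ext ω
    simp only [Set.mem_setOf_eq, Set.mem_iUnion, List.mem_toFinset]
    constructor
    · rintro ⟨z, h⟩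
      obtain ⟨l, h1, h2⟩ := conn_to_list h
      exact ⟨(z, l), h1, h2⟩
    · rintro ⟨⟨z, l⟩, h1, h2⟩
      exact ⟨z, conn_of_list h1 h2⟩
  rw [hrep]
  refine MeasurableSet.iUnion (m := MeasurableSpace.generateFrom _) fun q => ?_
  by_cases hq : ep u q.2 = (q.1, m)
  · have : {ω : Config | ep u q.2 = (q.1, m) ∧ ∀ e ∈ (edgesOf u q.2).toFinset, ω e = true}
        = {ω : Config | ∀ e ∈ (edgesOf u q.2).toFinset, ω e = true} := by
      ext ω; simp [hq]
    rw [this]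
    refine MeasurableSpace.measurableSet_generateFrom
      ⟨(edgesOf u q.2).toFinset, fun _ => true, ?_, rfl⟩
    intro e he
    rw [Finset.mem_coe, List.mem_toFinset] at he
    exact (edge_snd_of_mem u q.2 e he).1
  · have : {ω : Config | ep u q.2 = (q.1, m) ∧ ∀ e ∈ (edgesOf u q.2).toFinset, ω e = true}
        = ∅ := by
      ext ω; simp [hq]
    rw [this]
    exact (MeasurableSpace.generateFrom _).measurableSet_empty

lemma lowE_meas (v : Vtx) :
    MeasurableSet[MeasurableSpace.generateFrom (cylOn {e : Edge | e.1.2 < v.2})]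
      {ω : Config | ∃ y : ℤ, Conn ω (y, 0) v} := by
  classical
  have hrep : {ω : Config | ∃ y : ℤ, Conn ω (y, 0) v}
      = ⋃ q : ℤ × List Bool,
          {ω : Config | ep (q.1, 0) q.2 = v ∧
            ∀ e ∈ (edgesOf (q.1, 0) q.2).toFinset, ω e = true} := by
    ext ω
    simp only [Set.mem_setOf_eq, Set.mem_iUnion, List.mem_toFinset]
    constructor
    · rintro ⟨y, h⟩
      obtain ⟨l, h1, h2⟩ := conn_to_list h
      exact ⟨(y, l), h1, h2⟩
    · rintro ⟨⟨y, l⟩, h1, h2⟩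
      exact ⟨y, conn_of_list h1 h2⟩
  rw [hrep]
  refine MeasurableSet.iUnion (m := MeasurableSpace.generateFrom _) fun q => ?_
  by_cases hq : ep (q.1, 0) q.2 = v
  · have heq : {ω : Config | ep (q.1, 0) q.2 = v ∧
        ∀ e ∈ (edgesOf (q.1, 0) q.2).toFinset, ω e = true}
        = {ω : Config | ∀ e ∈ (edgesOf (q.1, 0) q.2).toFinset, ω e = true} := by
      ext ω; simp [hq]
    rw [heq]
    refine MeasurableSpace.measurableSet_generateFrom
      ⟨(edgesOf (q.1, 0) q.2).toFinset, fun _ => true, ?_, rfl⟩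
    intro e he
    rw [Finset.mem_coe, List.mem_toFinset] at he
    have h2 := (edge_snd_of_mem (q.1, 0) q.2 e he).2
    have h3 : v.2 = (0 : ℤ) + q.2.length := by
      rw [← hq, ep_snd]
    show e.1.2 < v.2
    rw [h3]
    simpa using h2
  · have heq : {ω : Config | ep (q.1, 0) q.2 = v ∧
        ∀ e ∈ (edgesOf (q.1, 0) q.2).toFinset, ω e = true} = ∅ := by
      ext ω; simp [hq]
    rw [heq]
    exact (MeasurableSpace.generateFrom _).measurableSet_empty

lemma connToLine_measurable (n : ℤ) :
    MeasurableSet {ω : Config | ConnToLine ω n} := by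
  have h := highE_meas (0, 0) n
  exact generateFrom_cylOn_le _ _ h

/-! ### Translation and reflection symmetry -/

lemma tip_add (t a : Vtx) (d : Bool) : tip (a + t, d) = tip (a, d) + t := by
  cases d <;> simp [tip, Prod.ext_iff] <;> ring_nf <;> constructor <;> trivial

/-- Translation of edges by `t`. -/
def trE (t : Vtx) : Edge ≃ Edge where
  toFun e := (e.1 + t, e.2)
  invFun e := (e.1 - t, e.2)
  left_inv e := by simp
  right_inv e := by simp

lemma step_trE_fwd (t : Vtx) {ω : Config} {a b : Vtx}
    (h : Step (fun e => ω (trE t e)) a b) : Step ω (a + t) (b + t) := by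
  obtain ⟨d, hd, rfl⟩ := h
  exact ⟨d, hd, (tip_add t a d).symm⟩

lemma step_trE_bwd (t : Vtx) {ω : Config} {a b : Vtx} (h : Step ω a b) :
    Step (fun e => ω (trE t e)) (a - t) (b - t) := by
  obtain ⟨d, hd, rfl⟩ := h
  refine ⟨d, ?_, ?_⟩
  · show ω (trE t (a - t, d)) = true
    have : trE t (a - t, d) = (a, d) := by simp [trE]
    rw [this]; exact hd
  · rw [sub_eq_add_neg, sub_eq_add_neg, tip_add]

/-- Point reflection of vertices: `v ↦ c - v`. -/
def refl2 (c : Vtx) : Vtx → Vtx := fun v => (c.1 - v.1, c.2 - v.2)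

lemma refl2_refl2 (c v : Vtx) : refl2 c (refl2 c v) = v := by
  simp [refl2]

/-- The induced reflection on edges. -/
def reflE (c : Vtx) : Edge → Edge := fun e => (refl2 c (tip e), e.2)

lemma tip_reflE (c a : Vtx) (d : Bool) : tip (refl2 c (tip (a, d)), d) = refl2 c a := by
  cases d <;> simp [tip, refl2, Prod.ext_iff] <;> constructor <;> ring_nf

lemma reflE_involutive (c : Vtx) : Function.Involutive (reflE c) := by
  rintro ⟨a, d⟩
  show (refl2 c (tip (refl2 c (tip (a, d)), d)), d) = (a, d)
  rw [tip_reflE, refl2_refl2]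

/-- The reflection as an equivalence. -/
def reflEquiv (c : Vtx) : Edge ≃ Edge := (reflE_involutive c).toPerm

lemma step_reflE (c : Vtx) {ω : Config} {a b : Vtx} (h : Step ω a b) :
    Step (fun e => ω (reflE c e)) (refl2 c b) (refl2 c a) := by
  obtain ⟨d, hd, rfl⟩ := h
  refine ⟨d, ?_, (tip_reflE c a d).symm⟩
  show ω (reflE c (refl2 c (tip (a, d)), d)) = true
  have : reflE c (refl2 c (tip (a, d)), d) = (a, d) := by
    show (refl2 c (tip (refl2 c (tip (a, d)), d)), d) = (a, d)
    rw [tip_reflE, refl2_refl2]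
  rw [this]; exact hd

variable {μ : Measure Config} {p : ℝ}

lemma measure_highE (hB : IsBernoulli μ p) (x : ℤ) (n : ℕ) :
    μ {ω : Config | ∃ z : ℤ, Conn ω (x, (n : ℤ)) (z, ((2 * n : ℕ) : ℤ))}
      = μ {ω : Config | ConnToLine ω (n : ℤ)} := by
  set t : Vtx := (x, (n : ℤ)) with ht
  have hset : {ω : Config | ∃ z : ℤ, Conn ω (x, (n : ℤ)) (z, ((2 * n : ℕ) : ℤ))}
      = (fun ω : Config => fun e => ω (trE t e)) ⁻¹' {ω : Config | ConnToLine ω (n : ℤ)} := by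
    ext ω
    simp only [Set.mem_preimage, Set.mem_setOf_eq, ConnToLine]
    constructor
    · rintro ⟨z, h⟩
      have h2 := conn_map (fun a b hab => step_trE_bwd t hab) h
      have e1 : ((x, (n : ℤ)) : Vtx) - t = ((0 : ℤ), (0 : ℤ)) := by
        simp [ht, Prod.ext_iff]
      have e2 : ((z, ((2 * n : ℕ) : ℤ)) : Vtx) - t = (z - x, (n : ℤ)) := by
        simp [ht, Prod.ext_iff]
        omega
      rw [e1, e2] at h2
      exact ⟨z - x, h2⟩
    · rintro ⟨z, h⟩
      have h2 := conn_map (fun a b hab => step_trE_fwd t hab) h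
      have e1 : (((0 : ℤ), (0 : ℤ)) : Vtx) + t = ((x : ℤ), (n : ℤ)) := by
        simp [ht]
      have e2 : ((z, (n : ℤ)) : Vtx) + t = (z + x, ((2 * n : ℕ) : ℤ)) := by
        simp [ht, Prod.ext_iff]
        omega
      rw [e1, e2] at h2
      exact ⟨z + x, h2⟩
  rw [hset, ← Measure.map_apply (measurable_remap (trE t)) (connToLine_measurable _),
    map_config_eq hB (trE t)]

lemma measure_lowE (hB : IsBernoulli μ p) (x : ℤ) (n : ℕ) :
    μ {ω : Config | ∃ y : ℤ, Conn ω (y, 0) (x, (n : ℤ))}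
      = μ {ω : Config | ConnToLine ω (n : ℤ)} := by
  set c : Vtx := (x, (n : ℤ)) with hc
  have hFF : ∀ ω : Config, (fun e => (fun e' => ω (reflE c e')) (reflE c e)) = ω := by
    intro ω; funext e
    show ω (reflE c (reflE c e)) = ω e
    rw [reflE_involutive c e]
  have hset : {ω : Config | ∃ y : ℤ, Conn ω (y, 0) (x, (n : ℤ))}
      = (fun ω : Config => fun e => ω (reflEquiv c e)) ⁻¹' {ω : Config | ConnToLine ω (n : ℤ)} := by
    ext ω
    simp only [Set.mem_preimage, Set.mem_setOf_eq, ConnToLine]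
    constructor
    · rintro ⟨y, h⟩
      have h2 := conn_map_rev (fun a b hab => step_reflE c hab) h
      have e1 : refl2 c ((x, (n : ℤ)) : Vtx) = ((0 : ℤ), (0 : ℤ)) := by
        simp [refl2, hc]
      have e2 : refl2 c ((y, (0 : ℤ)) : Vtx) = (x - y, (n : ℤ)) := by
        simp [refl2, hc]
      rw [e1, e2] at h2
      exact ⟨x - y, h2⟩
    · rintro ⟨z, h⟩
      have h2 := conn_map_rev (fun a b hab => step_reflE c (ω := fun e => ω (reflE c e)) hab) h
      rw [hFF ω] at h2
      have e1 : refl2 c ((z, (n : ℤ)) : Vtx) = (x - z, (0 : ℤ)) := by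
        simp [refl2, hc]
      have e2 : refl2 c (((0 : ℤ), (0 : ℤ)) : Vtx) = ((x : ℤ), (n : ℤ)) := by
        simp [refl2, hc]
      rw [e1, e2] at h2
      exact ⟨x - z, h2⟩
  rw [hset, ← Measure.map_apply (measurable_remap (reflEquiv c)) (connToLine_measurable _),
    map_config_eq hB (reflEquiv c)]

/-- There is a constant `c > 0` (depending only on `c₀`)
such that for every `n ≥ 1` and every integer `w ≥ 1` with `V(w, 2n) ≥ c₀`,
one has `P(0 → ℓ_n) ≥ c / √w`. -/
theorem one_arm_lower_bound (μ : Measure Config) (p : ℝ) (hB : IsBernoulli μ p)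
    (c₀ : ℝ) (hc₀ : 0 < c₀) :
    ∃ c : ℝ, 0 < c ∧ ∀ n w : ℕ, 1 ≤ n → 1 ≤ w →
      c₀ ≤ V μ w (2 * n) →
      c / Real.sqrt w ≤ (μ {ω | ConnToLine ω (n : ℤ)}).toReal := by
  have hP : IsProbabilityMeasure μ := hB.1
  refine ⟨Real.sqrt (c₀ / 2), Real.sqrt_pos.mpr (by linarith), ?_⟩
  intro n w hn hw hV
  set A := {ω : Config | ConnToLine ω (n : ℤ)} with hA
  set P := (μ A).toReal with hPdef
  set Lo : ℤ → Set Config := fun x => {ω | ∃ y : ℤ, Conn ω (y, 0) (x, (n : ℤ))} with hLo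
  set Hi : ℤ → Set Config :=
    fun x => {ω | ∃ z : ℤ, Conn ω (x, (n : ℤ)) (z, ((2 * n : ℕ) : ℤ))} with hHi
  have hsub : {ω : Config | CrossedVert ω 0 (w : ℤ) 0 ((2 * n : ℕ) : ℤ)}
      ⊆ ⋃ x ∈ Finset.Icc (0 : ℤ) (w : ℤ), Lo x ∩ Hi x := by
    intro ω hω
    obtain ⟨x, hx0, hxw, hlo, hhi⟩ := crossing_split hn hω
    exact Set.mem_iUnion₂.mpr ⟨x, Finset.mem_Icc.mpr ⟨hx0, hxw⟩, hlo, hhi⟩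
  have hprod : ∀ x : ℤ, μ (Lo x ∩ Hi x) = μ A * μ A := by
    intro x
    have hind := indep_halves hB (n : ℤ)
    rw [ProbabilityTheory.Indep_iff] at hind
    have hm1 : MeasurableSet[MeasurableSpace.generateFrom
        (cylOn {e : Edge | e.1.2 < (n : ℤ)})] (Lo x) := lowE_meas (x, (n : ℤ))
    have hm2 : MeasurableSet[MeasurableSpace.generateFrom
        (cylOn {e : Edge | (n : ℤ) ≤ e.1.2})] (Hi x) := highE_meas (x, (n : ℤ)) _
    rw [hind (Lo x) (Hi x) hm1 hm2, hLo, hHi]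
    rw [measure_lowE hB x n, measure_highE hB x n, hA]
  have hbound : μ {ω : Config | CrossedVert ω 0 (w : ℤ) 0 ((2 * n : ℕ) : ℤ)}
      ≤ (((w : ℕ) + 1 : ℕ) : ENNReal) * (μ A * μ A) := by
    calc μ {ω : Config | CrossedVert ω 0 (w : ℤ) 0 ((2 * n : ℕ) : ℤ)}
        ≤ μ (⋃ x ∈ Finset.Icc (0 : ℤ) (w : ℤ), Lo x ∩ Hi x) := measure_mono hsub
      _ ≤ ∑ x ∈ Finset.Icc (0 : ℤ) (w : ℤ), μ (Lo x ∩ Hi x) :=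
          measure_biUnion_finset_le _ _
      _ = ((Finset.Icc (0 : ℤ) (w : ℤ)).card : ENNReal) * (μ A * μ A) := by
          rw [Finset.sum_congr rfl fun x _ => hprod x, Finset.sum_const, nsmul_eq_mul]
      _ = (((w : ℕ) + 1 : ℕ) : ENNReal) * (μ A * μ A) := by
          congr 2
          rw [Int.card_Icc]
          omega
  have hfin : (((w : ℕ) + 1 : ℕ) : ENNReal) * (μ A * μ A) ≠ ⊤ :=
    ENNReal.mul_ne_top (ENNReal.natCast_ne_top _)
      (ENNReal.mul_ne_top (measure_ne_top _ _) (measure_ne_top _ _))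
  have h1 : V μ w (2 * n) ≤ ((w : ℝ) + 1) * (P * P) := by
    have h2 := ENNReal.toReal_mono hfin hbound
    have h3 : ((((w : ℕ) + 1 : ℕ) : ENNReal) * (μ A * μ A)).toReal = ((w : ℝ) + 1) * (P * P) := by
      rw [ENNReal.toReal_mul, ENNReal.toReal_mul, ENNReal.toReal_natCast]
      push_cast
      rfl
    rw [h3] at h2
    exact h2
  have hc₀le : c₀ ≤ ((w : ℝ) + 1) * (P * P) := le_trans hV h1
  have hPnn : 0 ≤ P := ENNReal.toReal_nonneg
  have hwpos : (0 : ℝ) < w := by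
    have : (1 : ℝ) ≤ (w : ℝ) := by exact_mod_cast hw
    linarith
  have hsq : c₀ / 2 / (w : ℝ) ≤ P ^ 2 := by
    rw [div_div, div_le_iff₀ (by linarith)]
    have hw1 : (w : ℝ) + 1 ≤ 2 * (w : ℝ) := by
      have : (1 : ℝ) ≤ (w : ℝ) := by exact_mod_cast hw
      linarith
    nlinarith [mul_nonneg hPnn hPnn]
  calc Real.sqrt (c₀ / 2) / Real.sqrt w = Real.sqrt (c₀ / 2 / (w : ℝ)) := by
        rw [Real.sqrt_div (by linarith : (0 : ℝ) ≤ c₀ / 2)]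
    _ ≤ Real.sqrt (P ^ 2) := Real.sqrt_le_sqrt hsq
    _ = P := Real.sqrt_sq hPnn

end OrientedPerc
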